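/- Every non-invertible transformation a of {1,...,n} is a product of idempotent transformations all of the same rank as a. -/

import Mathlib

/-- The full transformation monoid on `{1,...,n}`, modeled as `Function.End (Fin n)`
(multiplication is composition). -/
abbrev Tn (n : ℕ) := Function.End (Fin n)

/-- A permutation viewed as a transformation. -/
def ofPerm {n : ℕ} (g : Equiv.Perm (Fin n)) : Tn n := ⇑g

/-- The rank of a transformation: the size of its image. -/
def rnk {n : ℕ} (a : Tn n) : ℕ := (Finset.univ.image a).card

/-- The symmetric group embedded in `Tn n` as a set. -/
def perms (n : ℕ) : Set (Tn n) := Set.range (fun g : Equiv.Perm (Fin n) => ofPerm g)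

/-- The `S_n`-conjugacy class of a transformation. -/
def conjClass {n : ℕ} (t : Tn n) : Set (Tn n) :=
  {s | ∃ g : Equiv.Perm (Fin n), s = ofPerm g⁻¹ * t * ofPerm g}

namespace Stmt5Aux

variable {n : ℕ}

lemma end_mul_apply (f g : Tn n) (x : Fin n) : (f * g) x = f (g x) := rfl

lemma end_one_apply (x : Fin n) : (1 : Tn n) x = x := rfl

/-- A retraction onto the set `s`, sending everything outside `s` to `c`. -/
def retr (s : Finset (Fin n)) (c : Fin n) : Tn n :=
  fun x => if x ∈ s then x else c

lemma retr_apply_of_mem {s : Finset (Fin n)} {c x : Fin n} (h : x ∈ s) :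
    retr s c x = x := if_pos h

lemma retr_apply_of_not_mem {s : Finset (Fin n)} {c x : Fin n} (h : x ∉ s) :
    retr s c x = c := if_neg h

lemma retr_idem {s : Finset (Fin n)} {c : Fin n} (hc : c ∈ s) :
    retr s c * retr s c = retr s c := by
  funext x
  show retr s c (retr s c x) = retr s c x
  by_cases h : x ∈ s
  · simp only [retr_apply_of_mem h]
  · rw [retr_apply_of_not_mem h, retr_apply_of_mem hc]

lemma image_retr {s : Finset (Fin n)} {c : Fin n} (hc : c ∈ s) :
    Finset.univ.image (retr s c) = s := by
  ext y
  simp only [Finset.mem_image (f := (retr s c : Fin n → Fin n)), Finset.mem_univ, true_and]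
  constructor
  · rintro ⟨x, rfl⟩
    by_cases h : x ∈ s
    · rwa [retr_apply_of_mem h]
    · rw [retr_apply_of_not_mem h]; exact hc
  · intro hy
    exact ⟨y, retr_apply_of_mem hy⟩

lemma rnk_retr {s : Finset (Fin n)} {c : Fin n} (hc : c ∈ s) :
    rnk (retr s c) = s.card := by
  rw [rnk, image_retr hc]

/-- A swap can be realized on a set `I` of size `r < n` by a product of
idempotents of rank `r`. -/
lemma swap_on_set {r : ℕ} (hr : r < n) (I : Finset (Fin n)) (hI : I.card = r)
    (hI0 : I.Nonempty) (u v : Fin n) (huv : u ≠ v) :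
    ∃ L : List (Tn n), L ≠ [] ∧ (∀ e ∈ L, e * e = e ∧ rnk e = r) ∧
      ∀ x ∈ I, L.prod x = Equiv.swap u v x := by
  have hr1 : 1 ≤ r := hI ▸ Finset.card_pos.mpr hI0
  by_cases hu : u ∈ I <;> by_cases hv : v ∈ I
  · -- both in I : use a spare point p ∉ I
    have hne : I ≠ Finset.univ := by
      intro h
      rw [h, Finset.card_univ, Fintype.card_fin] at hI
      omega
    have hex : ∃ p, p ∉ I := by
      by_contra hno
      push_neg at hno
      exact hne (Finset.eq_univ_iff_forall.mpr hno)
    obtain ⟨p, hp⟩ := hex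
    have hpu : p ≠ u := fun h => hp (h ▸ hu)
    have hpv : p ≠ v := fun h => hp (h ▸ hv)
    set s1 : Finset (Fin n) := insert p (I.erase u) with hs1
    set s2 : Finset (Fin n) := insert p (I.erase v) with hs2
    have hps1 : p ∈ s1 := Finset.mem_insert_self _ _
    have hus2 : u ∈ s2 := Finset.mem_insert_of_mem (Finset.mem_erase.mpr ⟨huv, hu⟩)
    have hcard1 : s1.card = r := by
      rw [hs1, Finset.card_insert_of_notMem (fun h => hp (Finset.mem_of_mem_erase h)),
        Finset.card_erase_of_mem hu, hI]
      omega
    have hcard2 : s2.card = r := by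
      rw [hs2, Finset.card_insert_of_notMem (fun h => hp (Finset.mem_of_mem_erase h)),
        Finset.card_erase_of_mem hv, hI]
      omega
    refine ⟨[retr I v, retr s2 u, retr s1 p], by simp, ?_, ?_⟩
    · intro e he
      simp only [List.mem_cons, List.not_mem_nil, or_false] at he
      rcases he with rfl | rfl | rfl
      · exact ⟨retr_idem hv, by rw [rnk_retr hv, hI]⟩
      · exact ⟨retr_idem hus2, by rw [rnk_retr hus2, hcard2]⟩
      · exact ⟨retr_idem hps1, by rw [rnk_retr hps1, hcard1]⟩
    · intro x hx
      have hprod : ([retr I v, retr s2 u, retr s1 p] : List (Tn n)).prod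
          = retr I v * (retr s2 u * (retr s1 p * 1)) := by
        simp [List.prod]
      rw [hprod]
      simp only [end_mul_apply, end_one_apply]
      rcases eq_or_ne u x with rfl | hxu
      · have h1 : retr s1 p u = p := by
          apply retr_apply_of_not_mem
          simp [hs1, hpu.symm, Finset.mem_erase]
        have h2 : retr s2 u p = p := retr_apply_of_mem (Finset.mem_insert_self _ _)
        have h3 : retr I v p = v := retr_apply_of_not_mem hp
        rw [h1, h2, h3, Equiv.swap_apply_left]
      rcases eq_or_ne v x with rfl | hxv
      · have h1 : retr s1 p v = v :=
          retr_apply_of_mem (Finset.mem_insert_of_mem (Finset.mem_erase.mpr ⟨huv.symm, hv⟩))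
        have h2 : retr s2 u v = u := by
          apply retr_apply_of_not_mem
          simp [hs2, hpv.symm, Finset.mem_erase]
        have h3 : retr I v u = u := retr_apply_of_mem hu
        rw [h1, h2, h3, Equiv.swap_apply_right]
      · have h1 : retr s1 p x = x :=
          retr_apply_of_mem (Finset.mem_insert_of_mem (Finset.mem_erase.mpr ⟨hxu.symm, hx⟩))
        have h2 : retr s2 u x = x :=
          retr_apply_of_mem (Finset.mem_insert_of_mem (Finset.mem_erase.mpr ⟨hxv.symm, hx⟩))
        have h3 : retr I v x = x := retr_apply_of_mem hx
        rw [h1, h2, h3, Equiv.swap_apply_of_ne_of_ne hxu.symm hxv.symm]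
  · -- u ∈ I, v ∉ I
    set s : Finset (Fin n) := insert v (I.erase u) with hs
    have hvs : v ∈ s := Finset.mem_insert_self _ _
    have hcard : s.card = r := by
      rw [hs, Finset.card_insert_of_notMem (fun h => hv (Finset.mem_of_mem_erase h)),
        Finset.card_erase_of_mem hu, hI]
      omega
    refine ⟨[retr s v], by simp, ?_, ?_⟩
    · intro e he
      simp only [List.mem_cons, List.not_mem_nil, or_false] at he
      rcases he with rfl
      exact ⟨retr_idem hvs, by rw [rnk_retr hvs, hcard]⟩
    · intro x hx
      have hprod : ([retr s v] : List (Tn n)).prod = retr s v * 1 := by simp [List.prod]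
      rw [hprod]
      simp only [end_mul_apply, end_one_apply]
      rcases eq_or_ne u x with rfl | hxu
      · have h1 : retr s v u = v := by
          apply retr_apply_of_not_mem
          simp [hs, huv, Finset.mem_erase]
        rw [h1, Equiv.swap_apply_left]
      · have hxv : x ≠ v := fun h => hv (h ▸ hx)
        have h1 : retr s v x = x :=
          retr_apply_of_mem (Finset.mem_insert_of_mem (Finset.mem_erase.mpr ⟨hxu.symm, hx⟩))
        rw [h1, Equiv.swap_apply_of_ne_of_ne hxu.symm hxv]
  · -- u ∉ I, v ∈ I
    set s : Finset (Fin n) := insert u (I.erase v) with hs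
    have hus : u ∈ s := Finset.mem_insert_self _ _
    have hcard : s.card = r := by
      rw [hs, Finset.card_insert_of_notMem (fun h => hu (Finset.mem_of_mem_erase h)),
        Finset.card_erase_of_mem hv, hI]
      omega
    refine ⟨[retr s u], by simp, ?_, ?_⟩
    · intro e he
      simp only [List.mem_cons, List.not_mem_nil, or_false] at he
      rcases he with rfl
      exact ⟨retr_idem hus, by rw [rnk_retr hus, hcard]⟩
    · intro x hx
      have hprod : ([retr s u] : List (Tn n)).prod = retr s u * 1 := by simp [List.prod]
      rw [hprod]
      simp only [end_mul_apply, end_one_apply]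
      rcases eq_or_ne v x with rfl | hxv
      · have h1 : retr s u v = u := by
          apply retr_apply_of_not_mem
          simp [hs, huv.symm, Finset.mem_erase]
        rw [h1, Equiv.swap_apply_right]
      · have hxu : x ≠ u := fun h => hu (h ▸ hx)
        have h1 : retr s u x = x :=
          retr_apply_of_mem (Finset.mem_insert_of_mem (Finset.mem_erase.mpr ⟨hxv.symm, hx⟩))
        rw [h1, Equiv.swap_apply_of_ne_of_ne hxu hxv.symm]
  · -- neither in I : any retraction onto I works
    obtain ⟨c, hc⟩ := hI0
    refine ⟨[retr I c], by simp, ?_, ?_⟩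
    · intro e he
      simp only [List.mem_cons, List.not_mem_nil, or_false] at he
      rcases he with rfl
      exact ⟨retr_idem hc, by rw [rnk_retr hc, hI]⟩
    · intro x hx
      have hprod : ([retr I c] : List (Tn n)).prod = retr I c * 1 := by simp [List.prod]
      rw [hprod]
      simp only [end_mul_apply, end_one_apply]
      have hxu : x ≠ u := fun h => hu (h ▸ hx)
      have hxv : x ≠ v := fun h => hv (h ▸ hx)
      rw [retr_apply_of_mem hx, Equiv.swap_apply_of_ne_of_ne hxu hxv]

/-- A permutation composed with an idempotent of rank `r < n` is a product of
idempotents of rank `r`. -/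
lemma perm_mul_proj {r : ℕ} (hr : r < n) (π : Tn n) (hππ : π * π = π)
    (hπr : rnk π = r) (σ : Equiv.Perm (Fin n)) :
    ∃ L : List (Tn n), L ≠ [] ∧ (∀ e ∈ L, e * e = e ∧ rnk e = r) ∧
      ∀ x, σ (π x) = L.prod x := by
  refine Equiv.Perm.swap_induction_on σ ?_ ?_
  · exact ⟨[π], by simp, by
      intro e he
      simp only [List.mem_cons, List.not_mem_nil, or_false] at he
      rcases he with rfl
      exact ⟨hππ, hπr⟩, by
      intro x
      simp [List.prod, end_mul_apply, end_one_apply]⟩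
  · intro f u v huv IH
    obtain ⟨L', hne', hfac', hprod'⟩ := IH
    have hn0 : 0 < n := lt_of_le_of_lt (Nat.zero_le r) hr
    set I : Finset (Fin n) := Finset.univ.image (fun z => f (π z)) with hIdef
    have hIcard : I.card = r := by
      have : I = (Finset.univ.image π).image f := by
        rw [hIdef, Finset.image_image (f := π) (g := ⇑f)]; rfl
      rw [this, Finset.card_image_of_injective _ f.injective]
      exact hπr
    have hI0 : I.Nonempty := by
      refine ⟨f (π ⟨0, hn0⟩), ?_⟩
      exact Finset.mem_image_of_mem _ (Finset.mem_univ _)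
    obtain ⟨P, hPne, hPfac, hPeval⟩ := swap_on_set hr I hIcard hI0 u v huv
    refine ⟨P ++ L', by simp [hPne], ?_, ?_⟩
    · intro e he
      rcases List.mem_append.mp he with h | h
      · exact hPfac e h
      · exact hfac' e h
    · intro x
      have hmem : f (π x) ∈ I := Finset.mem_image_of_mem _ (Finset.mem_univ x)
      have : (P ++ L').prod x = P.prod (L'.prod x) := by
        rw [List.prod_append, end_mul_apply]
      rw [this, ← hprod' x, hPeval _ hmem]
      rfl

end Stmt5Aux

open Stmt5Aux in
/-- Every singular transformation is a product of idempotents of the same rank. -/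
theorem stmt5 (n : ℕ) (a : Tn n) (ha : ¬ Function.Bijective a) :
    ∃ L : List (Tn n), L ≠ [] ∧ (∀ e ∈ L, e * e = e ∧ rnk e = rnk a) ∧ a = L.prod := by
  classical
  -- n is positive
  rcases Nat.eq_zero_or_pos n with hn | hn
  · subst hn
    exact absurd ⟨fun x => x.elim0, fun y => y.elim0⟩ ha
  have : Nonempty (Fin n) := ⟨⟨0, hn⟩⟩
  -- the rank of a is < n
  set r : ℕ := rnk a with hrdef
  have hrle : r ≤ n := by
    have := Finset.card_image_le (s := (Finset.univ : Finset (Fin n))) (f := a)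
    simpa [hrdef, rnk, Finset.card_univ] using this
  have hrn : r < n := by
    rcases lt_or_eq_of_le hrle with h | h
    · exact h
    · exfalso
      apply ha
      have himg : Finset.univ.image a = Finset.univ := by
        apply Finset.eq_univ_of_card
        have h2 : (Finset.image a Finset.univ).card = r := hrdef.symm
        rw [Fintype.card_fin]
        omega
      have hsurj : Function.Surjective a := by
        intro y
        have : y ∈ Finset.univ.image a := by rw [himg]; exact Finset.mem_univ y
        obtain ⟨x, _, hx⟩ := Finset.mem_image.mp this
        exact ⟨x, hx⟩
      exact ⟨Finite.injective_iff_surjective.mpr hsurj, hsurj⟩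
  -- the canonical idempotent with the same kernel as a
  set π : Tn n := fun x => Function.invFun a (a x) with hπdef
  have ainv : ∀ x, a (Function.invFun a (a x)) = a x := fun x =>
    Function.invFun_eq ⟨x, rfl⟩
  have haπ : ∀ x, a (π x) = a x := ainv
  have hππ : π * π = π := by
    funext x
    show π (π x) = π x
    rw [hπdef]
    simp only
    rw [ainv]
  have hπfix : ∀ x, π (π x) = π x := fun x => congrFun hππ x
  have hπr : rnk π = r := by
    have himg : Finset.univ.image π = (Finset.univ.image a).image (Function.invFun a) := by
      rw [hπdef, Finset.image_image (f := (a : Fin n → Fin n)) (g := Function.invFun a)]; rfl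
    have hinj : Set.InjOn (Function.invFun a) (Finset.univ.image a) := by
      intro y1 hy1 y2 hy2 h
      simp only [Finset.coe_image (f := (a : Fin n → Fin n)), Set.mem_image] at hy1 hy2
      obtain ⟨x1, -, rfl⟩ := hy1
      obtain ⟨x2, -, rfl⟩ := hy2
      have := congrArg a h
      rwa [ainv, ainv] at this
    rw [rnk, himg, Finset.card_image_of_injOn hinj]
    exact hrdef.symm
  -- a permutation agreeing with a on the image of π
  set T : Finset (Fin n) := Finset.univ.image π with hTdef
  have hmemT : ∀ x, π x ∈ T := fun x => Finset.mem_image_of_mem _ (Finset.mem_univ x)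
  have hfixT : ∀ t ∈ T, π t = t := by
    intro t ht
    obtain ⟨z, -, rfl⟩ := Finset.mem_image.mp ht
    exact hπfix z
  let e : {x // x ∈ T} ≃ {y // y ∈ T.image a} :=
    { toFun := fun x => ⟨a x.1, Finset.mem_image_of_mem _ x.2⟩
      invFun := fun y => ⟨Function.invFun a y.1, by
        obtain ⟨t, ht, heq⟩ := Finset.mem_image.mp y.2
        have h1 : Function.invFun a (a t) ∈ T := hmemT t
        exact heq ▸ h1⟩
      left_inv := by
        rintro ⟨t, ht⟩
        apply Subtype.ext
        show Function.invFun a (a t) = t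
        exact hfixT t ht
      right_inv := by
        rintro ⟨y, hy⟩
        apply Subtype.ext
        show a (Function.invFun a y) = y
        obtain ⟨t, ht, heq⟩ := Finset.mem_image.mp hy
        rw [← heq]
        exact ainv t }
  set σ : Equiv.Perm (Fin n) := e.extendSubtype with hσdef
  have hσ : ∀ t ∈ T, σ t = a t := by
    intro t ht
    rw [hσdef, e.extendSubtype_apply_of_mem t ht]
    rfl
  have hfactor : ∀ x, a x = σ (π x) := by
    intro x
    rw [hσ (π x) (hmemT x)]
    exact (haπ x).symm
  obtain ⟨L, hLne, hLfac, hLprod⟩ := perm_mul_proj hrn π hππ hπr σ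
  refine ⟨L, hLne, hLfac, ?_⟩
  funext x
  rw [show a x = σ (π x) from hfactor x, hLprod x]
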